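/- arXiv:2010.02540 — 6 statements merged into one kernel-verified Lean document; each statement's English description precedes it below -/
import Mathlib

section
/- Under the deterministic multi-agent SIR recursion, for every agent i ∈ V and every k ∈ ℕ: y_i(k) = 1 if and only if k_i < ∞ and k ≥ k_i + R_i. In particular, if k_i < ∞ then R_i is the smallest positive integer r with y_i(k_i + r) = 1, and if k_i = ∞ then y_i(k) = 0 for all k. -/
open Finset

/-- The step function `ρ : ℤ → {0,1}`, `ρ(z) = 1` iff `z > 0`. -/
def stepFn (z : ℤ) : ℕ := if 0 < z then 1 else 0

/-- For every agent `i` and every `k`: `y_i(k) = 1` iff `k_i < ∞` and `k ≥ k_i + R_i`.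
In particular, if `k_i < ∞` then `R_i` is the smallest positive integer `r` with
`y_i(k_i + r) = 1`, and if `k_i = ∞` then `y_i(k) = 0` for all `k`. -/
theorem stmt2 {V : Type*} [Fintype V] [DecidableEq V]
    (E : V → V → Prop) [DecidableRel E]
    (hEsymm : ∀ i j, E i j ↔ E j i) (hEirr : ∀ i, ¬ E i i)
    (R : V → ℕ) (hR : ∀ i, 1 ≤ R i)
    (c : ℕ → V → V → ℕ) (hc01 : ∀ k i j, c k i j ≤ 1)
    (hcsymm : ∀ k i j, c k i j = c k j i)
    (u : ℕ → V → ℕ) (hu01 : ∀ k i, u k i ≤ 1)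
    (x0 : V → ℕ) (hx0 : ∀ i, x0 i ≤ 1)
    (x s : ℕ → V → ℕ)
    (hx_init : ∀ i, x 0 i = x0 i)
    (hs_init : ∀ i, s 0 i = 0)
    (hx_rec : ∀ k i, x (k + 1) i =
      stepFn ((R i : ℤ) - (s k i : ℤ)) *
        stepFn ((x k i : ℤ) +
          (∑ j ∈ Finset.univ.filter (fun j => E j i), (c k i j : ℤ) * (x k j : ℤ)) +
          (u k i : ℤ)))
    (hs_rec : ∀ k i, s (k + 1) i = s k i + x k i)
    (y : ℕ → V → ℕ)
    (hy : ∀ k i, y k i = 1 - stepFn ((R i : ℤ) - (s k i : ℤ)))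
    (ki : V → ℕ∞)
    (hki : ∀ i, ki i = sInf {n : ℕ∞ | ∃ m : ℕ, x m i = 1 ∧ n = (m : ℕ∞)}) :
    ∀ i : V,
      (∀ k : ℕ, (y k i = 1 ↔ ki i ≠ ⊤ ∧ ki i + (R i : ℕ∞) ≤ (k : ℕ∞))) ∧
      (∀ m : ℕ, ki i = (m : ℕ∞) →
        y (m + R i) i = 1 ∧ ∀ r : ℕ, 0 < r → y (m + r) i = 1 → R i ≤ r) ∧
      (ki i = ⊤ → ∀ k : ℕ, y k i = 0) := by
  intro i
  have hstep_le : ∀ z : ℤ, stepFn z ≤ 1 := fun z => by unfold stepFn; split <;> simp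
  have hx_le : ∀ k, x k i ≤ 1 := by
    intro k
    cases k with
    | zero => rw [hx_init]; exact hx0 i
    | succ k =>
      rw [hx_rec]
      have := Nat.mul_le_mul (hstep_le ((R i : ℤ) - (s k i : ℤ)))
        (hstep_le ((x k i : ℤ) +
          (∑ j ∈ Finset.univ.filter (fun j => E j i), (c k i j : ℤ) * (x k j : ℤ)) +
          (u k i : ℤ)))
      simpa using this
  have hy1 : ∀ k, (y k i = 1 ↔ R i ≤ s k i) := by
    intro k
    rw [hy]
    unfold stepFn
    split <;> omega
  have hs_mono : ∀ k l, k ≤ l → s k i ≤ s l i := by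
    intro k l h
    induction l, h using Nat.le_induction with
    | base => exact le_rfl
    | succ l hl ih => rw [hs_rec]; omega
  by_cases hall : ∀ k, x k i = 0
  · have hs0 : ∀ k, s k i = 0 := by
      intro k
      induction k with
      | zero => exact hs_init i
      | succ k ih => rw [hs_rec, ih, hall]
    have hy0 : ∀ k, y k i = 0 := by
      intro k
      rw [hy, hs0]
      unfold stepFn
      have := hR i
      split <;> omega
    have hkitop : ki i = ⊤ := by
      rw [hki i, sInf_eq_top]
      rintro a ⟨m, hm, rfl⟩
      simp [hall m] at hm
    refine ⟨?_, ?_, ?_⟩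
    · intro k; simp [hy0 k, hkitop]
    · intro m hm; rw [hkitop] at hm; simp at hm
    · intro _ k; exact hy0 k
  · push_neg at hall
    have hex : ∃ k, x k i = 1 := by
      obtain ⟨k, hk⟩ := hall
      exact ⟨k, by have := hx_le k; omega⟩
    set m := Nat.find hex with hm_def
    have hxm : x m i = 1 := Nat.find_spec hex
    have hmin : ∀ j, j < m → x j i = 0 := by
      intro j hj
      have := Nat.find_min hex hj
      have := hx_le j
      omega
    have hs_m : ∀ j, j ≤ m → s j i = 0 := by
      intro j hj
      induction j with
      | zero => exact hs_init i
      | succ j ih => rw [hs_rec, ih (by omega), hmin j (by omega)]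
    have hmain : ∀ t, t ≤ R i → x (m + t) i = 1 ∧ s (m + t) i = t := by
      intro t ht
      induction t with
      | zero => exact ⟨hxm, hs_m m le_rfl⟩
      | succ t ih =>
        obtain ⟨hxt, hst⟩ := ih (by omega)
        have hs' : s (m + (t + 1)) i = t + 1 := by
          rw [show m + (t + 1) = (m + t) + 1 from rfl, hs_rec, hst, hxt]
        refine ⟨?_, hs'⟩
        rw [show m + (t + 1) = (m + t) + 1 from rfl, hx_rec]
        have h1 : stepFn ((R i : ℤ) - (s (m + t) i : ℤ)) = 1 := by
          unfold stepFn
          rw [if_pos (by rw [hst]; push_cast; omega)]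
        have h2 : stepFn ((x (m + t) i : ℤ) +
            (∑ j ∈ Finset.univ.filter (fun j => E j i),
              (c (m + t) i j : ℤ) * (x (m + t) j : ℤ)) +
            (u (m + t) i : ℤ)) = 1 := by
          have hsum : (0:ℤ) ≤ ∑ j ∈ Finset.univ.filter (fun j => E j i),
              (c (m + t) i j : ℤ) * (x (m + t) j : ℤ) :=
            Finset.sum_nonneg (fun j _ => by positivity)
          have hu' : (0:ℤ) ≤ (u (m + t) i : ℤ) := by positivity
          have hx1 : ((x (m + t) i : ℤ)) = 1 := by exact_mod_cast hxt
          unfold stepFn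
          rw [if_pos (by rw [hx1]; linarith)]
        rw [h1, h2]
    have hafter : ∀ t, s (m + R i + 1 + t) i = R i + 1 ∧ x (m + R i + 1 + t) i = 0 := by
      intro t
      induction t with
      | zero =>
        obtain ⟨hxR, hsR⟩ := hmain (R i) le_rfl
        constructor
        · rw [show m + R i + 1 + 0 = (m + R i) + 1 from rfl, hs_rec, hsR, hxR]
        · rw [show m + R i + 1 + 0 = (m + R i) + 1 from rfl, hx_rec]
          have h0 : stepFn ((R i : ℤ) - (s (m + R i) i : ℤ)) = 0 := by
            unfold stepFn
            rw [if_neg (by rw [hsR]; push_cast; omega)]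
          rw [h0, Nat.zero_mul]
      | succ t ih =>
        obtain ⟨hst, hxt⟩ := ih
        have hs' : s (m + R i + 1 + (t + 1)) i = R i + 1 := by
          rw [show m + R i + 1 + (t + 1) = (m + R i + 1 + t) + 1 from rfl, hs_rec, hst, hxt]
        refine ⟨hs', ?_⟩
        rw [show m + R i + 1 + (t + 1) = (m + R i + 1 + t) + 1 from rfl, hx_rec]
        have h0 : stepFn ((R i : ℤ) - (s (m + R i + 1 + t) i : ℤ)) = 0 := by
          unfold stepFn
          rw [if_neg (by rw [hst]; push_cast; omega)]
        rw [h0, Nat.zero_mul]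
    have hschar : ∀ k, (R i ≤ s k i ↔ m + R i ≤ k) := by
      intro k
      constructor
      · intro h
        by_contra hlt
        push_neg at hlt
        rcases le_or_gt k m with h1 | h1
        · rw [hs_m k h1] at h; have := hR i; omega
        · obtain ⟨t, rfl⟩ : ∃ t, k = m + t := ⟨k - m, by omega⟩
          have ht : t ≤ R i := by omega
          have := (hmain t ht).2
          omega
      · intro h
        have h1 := (hmain (R i) le_rfl).2
        have h2 := hs_mono (m + R i) k h
        omega
    have hki_m : ki i = (m : ℕ∞) := by
      rw [hki i]
      apply le_antisymm
      · exact sInf_le ⟨m, hxm, rfl⟩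
      · apply le_sInf
        rintro n ⟨m', hm', rfl⟩
        exact_mod_cast Nat.find_min' hex hm'
    refine ⟨?_, ?_, ?_⟩
    · intro k
      rw [hy1 k, hschar k, hki_m]
      constructor
      · intro h
        refine ⟨by simp, ?_⟩
        exact_mod_cast h
      · rintro ⟨-, h⟩
        exact_mod_cast h
    · intro m' hm'
      rw [hki_m] at hm'
      have hmm : m' = m := by exact_mod_cast hm'.symm
      subst hmm
      constructor
      · rw [hy1, (hmain (R i) le_rfl).2]
      · intro r hr hyr
        rw [hy1] at hyr
        have := (hschar (m + r)).1 hyr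
        omega
    · intro h
      rw [hki_m] at h
      exact absurd h (by simp)
end

section
/- Under the deterministic multi-agent SIR recursion, the infection stopwatch has the closed form: for every agent i ∈ V with k_i < ∞ and every k ∈ ℕ, s_i(k) = 0 if k ≤ k_i, s_i(k) = R_i + 1 if k ≥ k_i + R_i + 1, and s_i(k) = k − k_i otherwise; moreover if k_i = ∞ then s_i(k) = 0 for all k. -/
open Finset

/-- Closed form of the infection stopwatch: for every agent `i` with `k_i < ∞` and every
`k`, `s_i(k) = 0` if `k ≤ k_i`, `s_i(k) = R_i + 1` if `k ≥ k_i + R_i + 1`, and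
`s_i(k) = k − k_i` otherwise; if `k_i = ∞` then `s_i(k) = 0` for all `k`. -/
theorem stmt5 {V : Type*} [Fintype V] [DecidableEq V]
    (E : V → V → Prop) [DecidableRel E]
    (hEsymm : ∀ i j, E i j ↔ E j i) (hEirr : ∀ i, ¬ E i i)
    (R : V → ℕ) (hR : ∀ i, 1 ≤ R i)
    (c : ℕ → V → V → ℕ) (hc01 : ∀ k i j, c k i j ≤ 1)
    (hcsymm : ∀ k i j, c k i j = c k j i)
    (u : ℕ → V → ℕ) (hu01 : ∀ k i, u k i ≤ 1)
    (x0 : V → ℕ) (hx0 : ∀ i, x0 i ≤ 1)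
    (x s : ℕ → V → ℕ)
    (hx_init : ∀ i, x 0 i = x0 i)
    (hs_init : ∀ i, s 0 i = 0)
    (hx_rec : ∀ k i, x (k + 1) i =
      stepFn ((R i : ℤ) - (s k i : ℤ)) *
        stepFn ((x k i : ℤ) +
          (∑ j ∈ Finset.univ.filter (fun j => E j i), (c k i j : ℤ) * (x k j : ℤ)) +
          (u k i : ℤ)))
    (hs_rec : ∀ k i, s (k + 1) i = s k i + x k i)
    (y : ℕ → V → ℕ)
    (hy : ∀ k i, y k i = 1 - stepFn ((R i : ℤ) - (s k i : ℤ)))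
    (ki : V → ℕ∞)
    (hki : ∀ i, ki i = sInf {n : ℕ∞ | ∃ m : ℕ, x m i = 1 ∧ n = (m : ℕ∞)}) :
    ∀ i : V,
      (∀ m : ℕ, ki i = (m : ℕ∞) → ∀ k : ℕ,
        s k i = if k ≤ m then 0 else if m + R i + 1 ≤ k then R i + 1 else k - m) ∧
      (ki i = ⊤ → ∀ k : ℕ, s k i = 0) := by
  have step_le : ∀ z : ℤ, stepFn z ≤ 1 := by
    intro z; unfold stepFn; split <;> simp
  have step_one : ∀ z : ℤ, 0 < z → stepFn z = 1 := by
    intro z hz; unfold stepFn; simp [hz]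
  have step_zero : ∀ z : ℤ, ¬ 0 < z → stepFn z = 0 := by
    intro z hz; unfold stepFn; simp [hz]
  intro i
  have hxle : ∀ k, x k i ≤ 1 := by
    intro k
    cases k with
    | zero => rw [hx_init]; exact hx0 i
    | succ n => rw [hx_rec]; exact mul_le_one' (step_le _) (step_le _)
  have szero : ∀ k, (∀ n, n < k → x n i = 0) → s k i = 0 := by
    intro k
    induction k with
    | zero => intro _; exact hs_init i
    | succ n ih =>
      intro h
      rw [hs_rec, ih (fun m hm => h m (hm.trans (Nat.lt_succ_self n))),
        h n (Nat.lt_succ_self n)]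
  constructor
  · intro m hm k
    rw [hki i] at hm
    -- extract first-infection facts
    have hne : ∃ n, x n i = 1 := by
      by_contra h
      push_neg at h
      have : {n : ℕ∞ | ∃ m : ℕ, x m i = 1 ∧ n = (m : ℕ∞)} = ∅ := by
        ext n; simp only [Set.mem_setOf_eq, Set.mem_empty_iff_false, iff_false]
        rintro ⟨m', hm', -⟩; exact h m' hm'
      rw [this, sInf_empty] at hm
      exact (WithTop.natCast_ne_top m) hm.symm
    have hfind : sInf {n : ℕ∞ | ∃ m : ℕ, x m i = 1 ∧ n = (m : ℕ∞)}
        = ((Nat.find hne : ℕ) : ℕ∞) := by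
      apply le_antisymm
      · exact sInf_le ⟨Nat.find hne, Nat.find_spec hne, rfl⟩
      · apply le_sInf
        rintro b ⟨n, hn, rfl⟩
        exact Nat.cast_le.mpr (Nat.find_le hn)
    rw [hfind] at hm
    have hmfind : m = Nat.find hne := (Nat.cast_inj.mp hm).symm
    have hx_m : x m i = 1 := hmfind ▸ Nat.find_spec hne
    have hbefore : ∀ n, n < m → x n i = 0 := by
      intro n hn
      have h1 := Nat.find_min hne (hmfind ▸ hn)
      have := hxle n
      omega
    have hsm : s m i = 0 := szero m hbefore
    -- positivity of the interaction term when x k i = 1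
    have hpos : ∀ k', x k' i = 1 →
        (0 : ℤ) < (x k' i : ℤ) +
          (∑ j ∈ Finset.univ.filter (fun j => E j i), (c k' i j : ℤ) * (x k' j : ℤ)) +
          (u k' i : ℤ) := by
      intro k' hk'
      have h1 : (0:ℤ) ≤ ∑ j ∈ Finset.univ.filter (fun j => E j i),
          (c k' i j : ℤ) * (x k' j : ℤ) :=
        Finset.sum_nonneg fun j _ => mul_nonneg (Int.natCast_nonneg _) (Int.natCast_nonneg _)
      have h2 : (0:ℤ) ≤ (u k' i : ℤ) := Int.natCast_nonneg _
      rw [hk']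
      push_cast
      linarith
    -- during infection
    have hB : ∀ t, t ≤ R i → x (m + t) i = 1 ∧ s (m + t) i = t := by
      intro t
      induction t with
      | zero => intro _; exact ⟨hx_m, hsm⟩
      | succ t ih =>
        intro ht
        obtain ⟨hxt, hst⟩ := ih (by omega)
        have heq : m + (t + 1) = (m + t) + 1 := by omega
        have hs' : s (m + (t + 1)) i = t + 1 := by
          rw [heq, hs_rec, hst, hxt]
        refine ⟨?_, hs'⟩
        rw [heq, hx_rec, hst, step_one _ (by push_cast; omega),
          step_one _ (hpos _ hxt), one_mul]
    obtain ⟨hxR, hsR⟩ := hB (R i) le_rfl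
    have hstop : s (m + R i + 1) i = R i + 1 := by
      rw [hs_rec, hsR, hxR]
    have hxstop : x (m + R i + 1) i = 0 := by
      rw [hx_rec, hsR, step_zero _ (by push_cast; omega), zero_mul]
    have hC : ∀ t, s (m + R i + 1 + t) i = R i + 1 ∧ x (m + R i + 1 + t) i = 0 := by
      intro t
      induction t with
      | zero => exact ⟨hstop, hxstop⟩
      | succ t ih =>
        obtain ⟨hst, hxt⟩ := ih
        have heq : m + R i + 1 + (t + 1) = (m + R i + 1 + t) + 1 := by omega
        have hs' : s (m + R i + 1 + (t + 1)) i = R i + 1 := by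
          rw [heq, hs_rec, hst, hxt]
        refine ⟨hs', ?_⟩
        rw [heq, hx_rec, hst, step_zero _ (by push_cast; omega), zero_mul]
    by_cases hk1 : k ≤ m
    · rw [if_pos hk1]
      exact szero k fun n hn => hbefore n (by omega)
    · rw [if_neg hk1]
      by_cases hk2 : m + R i + 1 ≤ k
      · rw [if_pos hk2]
        have := (hC (k - (m + R i + 1))).1
        rwa [show m + R i + 1 + (k - (m + R i + 1)) = k by omega] at this
      · rw [if_neg hk2]
        have := (hB (k - m) (by omega)).2
        rwa [show m + (k - m) = k by omega] at this
  · intro htop k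
    rw [hki i] at htop
    have hall : ∀ n, x n i = 0 := by
      intro n
      by_contra h
      have hx1 : x n i = 1 := by have := hxle n; omega
      have : sInf {n : ℕ∞ | ∃ m : ℕ, x m i = 1 ∧ n = (m : ℕ∞)} ≤ (n : ℕ∞) :=
        sInf_le ⟨n, hx1, rfl⟩
      rw [htop] at this
      exact (WithTop.natCast_ne_top n) (top_le_iff.mp this)
    exact szero k fun n _ => hall n
end

section
/- Under the deterministic multi-agent SIR recursion, each agent is infectious exactly on a window of length R_i + 1: for every agent i ∈ V with k_i < ∞ and every k ∈ ℕ, x_i(k) = 1 if and only if k_i ≤ k ≤ k_i + R_i; and if k_i = ∞ then x_i(k) = 0 for all k. -/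
open Finset

lemma stepFn_le_one (z : ℤ) : stepFn z ≤ 1 := by
  unfold stepFn; split <;> simp

lemma stepFn_of_pos {z : ℤ} (h : 0 < z) : stepFn z = 1 := if_pos h

lemma stepFn_of_nonpos {z : ℤ} (h : z ≤ 0) : stepFn z = 0 := if_neg (not_lt.2 h)

/-- Each agent is infectious exactly on a window of length `R_i + 1`: for every agent `i`
with `k_i < ∞` and every `k`, `x_i(k) = 1` iff `k_i ≤ k ≤ k_i + R_i`; if `k_i = ∞` then
`x_i(k) = 0` for all `k`. -/
theorem stmt6 {V : Type*} [Fintype V] [DecidableEq V]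
    (E : V → V → Prop) [DecidableRel E]
    (hEsymm : ∀ i j, E i j ↔ E j i) (hEirr : ∀ i, ¬ E i i)
    (R : V → ℕ) (hR : ∀ i, 1 ≤ R i)
    (c : ℕ → V → V → ℕ) (hc01 : ∀ k i j, c k i j ≤ 1)
    (hcsymm : ∀ k i j, c k i j = c k j i)
    (u : ℕ → V → ℕ) (hu01 : ∀ k i, u k i ≤ 1)
    (x0 : V → ℕ) (hx0 : ∀ i, x0 i ≤ 1)
    (x s : ℕ → V → ℕ)
    (hx_init : ∀ i, x 0 i = x0 i)
    (hs_init : ∀ i, s 0 i = 0)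
    (hx_rec : ∀ k i, x (k + 1) i =
      stepFn ((R i : ℤ) - (s k i : ℤ)) *
        stepFn ((x k i : ℤ) +
          (∑ j ∈ Finset.univ.filter (fun j => E j i), (c k i j : ℤ) * (x k j : ℤ)) +
          (u k i : ℤ)))
    (hs_rec : ∀ k i, s (k + 1) i = s k i + x k i)
    (y : ℕ → V → ℕ)
    (hy : ∀ k i, y k i = 1 - stepFn ((R i : ℤ) - (s k i : ℤ)))
    (ki : V → ℕ∞)
    (hki : ∀ i, ki i = sInf {n : ℕ∞ | ∃ m : ℕ, x m i = 1 ∧ n = (m : ℕ∞)}) :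
    ∀ i : V,
      (∀ m : ℕ, ki i = (m : ℕ∞) → ∀ k : ℕ, (x k i = 1 ↔ m ≤ k ∧ k ≤ m + R i)) ∧
      (ki i = ⊤ → ∀ k : ℕ, x k i = 0) := by
  have hxle : ∀ k j, x k j ≤ 1 := by
    intro k
    cases k with
    | zero => intro j; rw [hx_init]; exact hx0 j
    | succ n =>
      intro j; rw [hx_rec]
      calc stepFn _ * stepFn _ ≤ 1 * 1 :=
            Nat.mul_le_mul (stepFn_le_one _) (stepFn_le_one _)
        _ = 1 := by norm_num
  intro i
  constructor
  · intro m hm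
    -- there is some infection time
    have hne : ∃ n, x n i = 1 := by
      by_contra h
      push_neg at h
      have htop : sInf {n : ℕ∞ | ∃ t : ℕ, x t i = 1 ∧ n = (t : ℕ∞)} = ⊤ := by
        rw [sInf_eq_top]
        rintro n ⟨t, ht, rfl⟩
        exact absurd ht (h t)
      rw [hki i, htop] at hm
      simp at hm
    have hInf : sInf {n : ℕ∞ | ∃ t : ℕ, x t i = 1 ∧ n = (t : ℕ∞)}
        = ((Nat.find hne : ℕ) : ℕ∞) := by
      apply le_antisymm
      · exact sInf_le ⟨Nat.find hne, Nat.find_spec hne, rfl⟩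
      · apply le_sInf
        rintro n ⟨t, ht, rfl⟩
        exact_mod_cast Nat.find_min' hne ht
    have hmfind : m = Nat.find hne := by
      rw [hki i, hInf] at hm
      exact_mod_cast hm.symm
    have hxm : x m i = 1 := hmfind ▸ Nat.find_spec hne
    have hmin : ∀ t, t < m → x t i = 0 := by
      intro t ht
      have h1 : x t i ≠ 1 := Nat.find_min hne (hmfind ▸ ht)
      have := hxle t i
      omega
    -- s is zero up to time m
    have hs0 : ∀ t, t ≤ m → s t i = 0 := by
      intro t
      induction t with
      | zero => intro _; exact hs_init i
      | succ n ih =>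
        intro h
        rw [hs_rec, ih (by omega), hmin n (by omega)]
    -- infection window
    have key : ∀ d, d ≤ R i → x (m + d) i = 1 ∧ s (m + d) i = d := by
      intro d
      induction d with
      | zero => intro _; exact ⟨by simpa using hxm, by simpa using hs0 m le_rfl⟩
      | succ d ih =>
        intro h
        obtain ⟨hx1, hs1⟩ := ih (by omega)
        constructor
        · rw [show m + (d + 1) = (m + d) + 1 from rfl, hx_rec, hs1]
          have hpos1 : (0 : ℤ) < (R i : ℤ) - (d : ℤ) := by omega
          have hpos2 : (0 : ℤ) < (x (m + d) i : ℤ) +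
              (∑ j ∈ Finset.univ.filter (fun j => E j (i : V)),
                (c (m + d) i j : ℤ) * (x (m + d) j : ℤ)) + (u (m + d) i : ℤ) := by
            rw [hx1]
            push_cast
            have hsum : (0 : ℤ) ≤ ∑ j ∈ Finset.univ.filter (fun j => E j (i : V)),
                (c (m + d) i j : ℤ) * (x (m + d) j : ℤ) :=
              Finset.sum_nonneg fun j _ => mul_nonneg (Int.natCast_nonneg _) (Int.natCast_nonneg _)
            have hu : (0 : ℤ) ≤ (u (m + d) i : ℤ) := Int.natCast_nonneg _
            linarith
          rw [stepFn_of_pos hpos1, stepFn_of_pos hpos2]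
        · rw [show m + (d + 1) = (m + d) + 1 from rfl, hs_rec, hs1, hx1]
    -- s is monotone
    have hsmono : ∀ a b, a ≤ b → s a i ≤ s b i := by
      have haux : ∀ a t, s a i ≤ s (a + t) i := by
        intro a t
        induction t with
        | zero => exact le_rfl
        | succ n ih =>
          rw [show a + (n + 1) = (a + n) + 1 from rfl, hs_rec]
          omega
      intro a b hab
      have := haux a (b - a)
      rwa [show a + (b - a) = b by omega] at this
    have hsR : s (m + R i) i = R i := (key (R i) le_rfl).2
    have htail : ∀ k, m + R i < k → x k i = 0 := by
      intro k hk
      obtain ⟨t, rfl⟩ : ∃ t, k = t + 1 := ⟨k - 1, by omega⟩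
      rw [hx_rec]
      have hst : R i ≤ s t i := hsR ▸ hsmono (m + R i) t (by omega)
      have : (R i : ℤ) - (s t i : ℤ) ≤ 0 := by
        have : (R i : ℤ) ≤ (s t i : ℤ) := by exact_mod_cast hst
        linarith
      rw [stepFn_of_nonpos this, Nat.zero_mul]
    intro k
    constructor
    · intro hxk
      constructor
      · by_contra h
        push_neg at h
        have := hmin k h
        omega
      · by_contra h
        push_neg at h
        have := htail k h
        omega
    · rintro ⟨h1, h2⟩
      have := (key (k - m) (by omega)).1
      rwa [show m + (k - m) = k by omega] at this
  · intro htop k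
    have h1 : x k i ≠ 1 := by
      intro h
      have hle : sInf {n : ℕ∞ | ∃ t : ℕ, x t i = 1 ∧ n = (t : ℕ∞)} ≤ (k : ℕ∞) :=
        sInf_le ⟨k, h, rfl⟩
      rw [← hki i, htop] at hle
      exact absurd (top_le_iff.mp hle) (by simp)
    have := hxle k i
    omega
end

section
/- Under the deterministic multi-agent SIR recursion, the number of infected agents at every time k ∈ ℕ satisfies Σ_{i ∈ V} x_i(k) = Σ_{i ∈ V, k_i < ∞} (ρ(k − k_i + 1) − ρ(k − k_i − R_i)), where the differences are computed in ℤ. -/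
open Finset

/-- The number of infected agents at every time `k` satisfies
`Σ_{i ∈ V} x_i(k) = Σ_{i ∈ V, k_i < ∞} (ρ(k − k_i + 1) − ρ(k − k_i − R_i))`,
the differences computed in `ℤ`. -/
theorem stmt7 {V : Type*} [Fintype V] [DecidableEq V]
    (E : V → V → Prop) [DecidableRel E]
    (hEsymm : ∀ i j, E i j ↔ E j i) (hEirr : ∀ i, ¬ E i i)
    (R : V → ℕ) (hR : ∀ i, 1 ≤ R i)
    (c : ℕ → V → V → ℕ) (hc01 : ∀ k i j, c k i j ≤ 1)
    (hcsymm : ∀ k i j, c k i j = c k j i)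
    (u : ℕ → V → ℕ) (hu01 : ∀ k i, u k i ≤ 1)
    (x0 : V → ℕ) (hx0 : ∀ i, x0 i ≤ 1)
    (x s : ℕ → V → ℕ)
    (hx_init : ∀ i, x 0 i = x0 i)
    (hs_init : ∀ i, s 0 i = 0)
    (hx_rec : ∀ k i, x (k + 1) i =
      stepFn ((R i : ℤ) - (s k i : ℤ)) *
        stepFn ((x k i : ℤ) +
          (∑ j ∈ Finset.univ.filter (fun j => E j i), (c k i j : ℤ) * (x k j : ℤ)) +
          (u k i : ℤ)))
    (hs_rec : ∀ k i, s (k + 1) i = s k i + x k i)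
    (y : ℕ → V → ℕ)
    (hy : ∀ k i, y k i = 1 - stepFn ((R i : ℤ) - (s k i : ℤ)))
    (ki : V → ℕ∞)
    (hki : ∀ i, ki i = sInf {n : ℕ∞ | ∃ m : ℕ, x m i = 1 ∧ n = (m : ℕ∞)}) :
    ∀ k : ℕ,
      (∑ i : V, (x k i : ℤ)) =
        ∑ i ∈ Finset.univ.filter (fun i => ki i ≠ ⊤),
          ((stepFn ((k : ℤ) - ((ki i).toNat : ℤ) + 1) : ℤ) -
            (stepFn ((k : ℤ) - ((ki i).toNat : ℤ) - (R i : ℤ)) : ℤ)) := by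
  have hstep1 : ∀ z : ℤ, 0 < z → stepFn z = 1 := fun z h => if_pos h
  have hstep0 : ∀ z : ℤ, z ≤ 0 → stepFn z = 0 := fun z h => if_neg (by omega)
  have hstep_le : ∀ z : ℤ, stepFn z ≤ 1 := fun z => by unfold stepFn; split <;> omega
  have hx01 : ∀ k i, x k i ≤ 1 := by
    intro k i
    cases k with
    | zero => rw [hx_init]; exact hx0 i
    | succ k =>
      rw [hx_rec]
      calc _ ≤ 1 * 1 := Nat.mul_le_mul (hstep_le _) (hstep_le _)
        _ = 1 := by ring
  have hsum : ∀ k i, s k i = ∑ m ∈ Finset.range k, x m i := by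
    intro k i
    induction k with
    | zero => simpa using hs_init i
    | succ k ih => rw [hs_rec, ih, Finset.sum_range_succ]
  have hx_stay : ∀ k i, x k i = 1 → x (k+1) i = stepFn ((R i : ℤ) - (s k i : ℤ)) := by
    intro k i hxi
    rw [hx_rec, hxi]
    have hnn : (0:ℤ) ≤ ∑ j ∈ Finset.univ.filter (fun j => E j i), (c k i j : ℤ) * (x k j : ℤ) :=
      Finset.sum_nonneg (fun j _ => by positivity)
    have hu : (0:ℤ) ≤ (u k i : ℤ) := by positivity
    rw [hstep1 (((1:ℕ):ℤ) + _ + (u k i : ℤ)) (by push_cast; omega), mul_one]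
  -- ki characterizations
  have hki_fin : ∀ i m, x m i = 1 → ki i ≠ ⊤ := by
    intro i m hm
    have : ki i ≤ (m : ℕ∞) := by
      rw [hki]
      exact sInf_le ⟨m, hm, rfl⟩
    exact fun h => by simp [h] at this
  have hki_top : ∀ i, ki i = ⊤ → ∀ m, x m i = 0 := by
    intro i h m
    have h1 := hx01 m i
    rcases Nat.lt_or_ge (x m i) 1 with h2 | h2
    · omega
    · exact absurd h (hki_fin i m (by omega))
  have hki_char : ∀ i, ki i ≠ ⊤ → x ((ki i).toNat) i = 1 ∧ ∀ m < (ki i).toNat, x m i = 0 := by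
    intro i hne
    have hS : ∃ m : ℕ, x m i = 1 := by
      by_contra hc
      push_neg at hc
      apply hne
      rw [hki]
      rw [show {n : ℕ∞ | ∃ m : ℕ, x m i = 1 ∧ n = (m : ℕ∞)} = ∅ from ?_, sInf_empty]
      ext n
      simp only [Set.mem_setOf_eq, Set.mem_empty_iff_false, iff_false]
      rintro ⟨m, hm, rfl⟩
      exact hc m hm
    set n0 := Nat.find hS with hn0def
    have hkieq : ki i = (n0 : ℕ∞) := by
      rw [hki]
      apply le_antisymm
      · exact sInf_le ⟨n0, Nat.find_spec hS, rfl⟩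
      · apply le_sInf
        rintro b ⟨m, hm, rfl⟩
        exact_mod_cast Nat.cast_le.mpr (Nat.find_min' hS hm)
    have htn : (ki i).toNat = n0 := by rw [hkieq]; simp
    rw [htn]
    refine ⟨Nat.find_spec hS, fun m hm => ?_⟩
    have := Nat.find_min hS hm
    have := hx01 m i
    omega
  -- main per-agent characterization
  have hmain : ∀ i n, x n i = 1 → (∀ m < n, x m i = 0) →
      ∀ k, x k i = if n ≤ k ∧ k ≤ n + R i then 1 else 0 := by
    intro i n hn1 hn0
    have hsn : s n i = 0 := by
      rw [hsum]
      exact Finset.sum_eq_zero (fun m hm => hn0 m (Finset.mem_range.mp hm))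
    have claim1 : ∀ t, t ≤ R i → x (n+t) i = 1 ∧ s (n+t) i = t := by
      intro t
      induction t with
      | zero => exact fun _ => ⟨hn1, hsn⟩
      | succ t ih =>
        intro ht
        obtain ⟨hx1, hs1⟩ := ih (by omega)
        have hx2 : x (n+t+1) i = 1 := by
          rw [hx_stay _ _ hx1, hs1]
          exact hstep1 _ (by push_cast; omega)
        have hs2 : s (n+t+1) i = t+1 := by rw [hs_rec, hx1, hs1]
        exact ⟨hx2, hs2⟩
    have claim2 : ∀ j, x (n + R i + 1 + j) i = 0 ∧ R i + 1 ≤ s (n + R i + 1 + j) i := by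
      intro j
      induction j with
      | zero =>
        obtain ⟨hx1, hs1⟩ := claim1 (R i) le_rfl
        constructor
        · show x (n + R i + 1 + 0) i = 0
          rw [Nat.add_zero, hx_rec, hs1, hstep0 _ (by omega), zero_mul]
        · show R i + 1 ≤ s (n + R i + 1 + 0) i
          rw [Nat.add_zero, hs_rec, hx1, hs1]
      | succ j ih =>
        obtain ⟨hx1, hs1⟩ := ih
        have hseq : s (n + R i + 1 + j + 1) i = s (n + R i + 1 + j) i := by
          rw [hs_rec, hx1, Nat.add_zero]
        constructor
        · show x (n + R i + 1 + j + 1) i = 0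
          rw [hx_rec, hstep0 _ (by push_cast; omega), zero_mul]
        · show R i + 1 ≤ s (n + R i + 1 + j + 1) i
          rw [hseq]; exact hs1
    intro k
    split_ifs with h
    · obtain ⟨hkn, hkR⟩ := h
      obtain ⟨t, rfl⟩ := Nat.exists_eq_add_of_le hkn
      exact (claim1 t (by omega)).1
    · rcases Nat.lt_or_ge k n with hk | hk
      · exact hn0 k hk
      · have hk2 : n + R i + 1 ≤ k := by omega
        obtain ⟨j, rfl⟩ := Nat.exists_eq_add_of_le hk2
        exact (claim2 j).1
  intro k
  rw [← Finset.sum_filter_add_sum_filter_not Finset.univ (fun i => ki i ≠ ⊤)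
    (fun i => (x k i : ℤ))]
  have h2 : ∑ i ∈ Finset.univ.filter (fun i => ¬ ki i ≠ ⊤), (x k i : ℤ) = 0 := by
    apply Finset.sum_eq_zero
    intro i hi
    have := (Finset.mem_filter.mp hi).2
    rw [hki_top i (not_not.mp this) k]
    simp
  rw [h2, add_zero]
  apply Finset.sum_congr rfl
  intro i hi
  have hne := (Finset.mem_filter.mp hi).2
  obtain ⟨h1, h0⟩ := hki_char i hne
  rw [hmain i _ h1 h0 k]
  simp only [stepFn]
  split_ifs <;> push_cast <;> omega
end

section
/- Equivalence of the SIR recursion with its Boolean formulation: assume u_i(k) = 0 for all i and k (no external infection). Then for every agent i ∈ V and every k ∈ ℕ: x_i(k) = x^b_i(k), and s_i(k) ≥ R_i if and only if y^b_i(k) = 1. -/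
open Finset

/-- Equivalence of the SIR recursion with its Boolean formulation: assuming no external
infection (`u ≡ 0`), for every agent `i` and time `k ∈ ℕ`: `x_i(k) = x^b_i(k)`, and
`s_i(k) ≥ R_i` iff `y^b_i(k) = 1`. -/
theorem stmt8 {V : Type*} [Fintype V] [DecidableEq V]
    (E : V → V → Prop) [DecidableRel E]
    (hEsymm : ∀ i j, E i j ↔ E j i) (hEirr : ∀ i, ¬ E i i)
    (R : V → ℕ) (hR : ∀ i, 1 ≤ R i)
    (c : ℕ → V → V → ℕ) (hc01 : ∀ k i j, c k i j ≤ 1)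
    (hcsymm : ∀ k i j, c k i j = c k j i)
    (u : ℕ → V → ℕ) (hu01 : ∀ k i, u k i ≤ 1)
    (x0 : V → ℕ) (hx0 : ∀ i, x0 i ≤ 1)
    (x s : ℕ → V → ℕ)
    (hx_init : ∀ i, x 0 i = x0 i)
    (hs_init : ∀ i, s 0 i = 0)
    (hx_rec : ∀ k i, x (k + 1) i =
      stepFn ((R i : ℤ) - (s k i : ℤ)) *
        stepFn ((x k i : ℤ) +
          (∑ j ∈ Finset.univ.filter (fun j => E j i), (c k i j : ℤ) * (x k j : ℤ)) +
          (u k i : ℤ)))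
    (hs_rec : ∀ k i, s (k + 1) i = s k i + x k i)
    (y : ℕ → V → ℕ)
    (hy : ∀ k i, y k i = 1 - stepFn ((R i : ℤ) - (s k i : ℤ)))
    (hu0 : ∀ k i, u k i = 0)
    (xb yb : ℤ → V → Bool)
    (hxb_neg : ∀ k : ℤ, k < 0 → ∀ i, xb k i = false)
    (hxb_init : ∀ i, (xb 0 i = true ↔ x0 i = 1))
    (hyb_init : ∀ i, yb 0 i = false)
    (hxb_rec : ∀ (k : ℕ) (i : V),
      xb ((k : ℤ) + 1) i =
        ((xb (k : ℤ) i ||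
            (Finset.univ.filter (fun j => E j i)).sup
              (fun j => decide (c k i j = 1) && xb (k : ℤ) j)) &&
          !yb (k : ℤ) i))
    (hyb_rec : ∀ (k : ℕ) (i : V),
      yb ((k : ℤ) + 1) i = (yb (k : ℤ) i || xb ((k : ℤ) - (R i : ℤ) + 1) i)) :
    ∀ (i : V) (k : ℕ),
      x k i = (if xb (k : ℤ) i then 1 else 0) ∧
      (R i ≤ s k i ↔ yb (k : ℤ) i = true) := by
  classical
  have bool_cases : ∀ b : Bool, b = false ∨ b = true := fun b => by cases b <;> simp
  -- stepFn basics
  have step_pos : ∀ z : ℤ, 0 < z → stepFn z = 1 := fun z h => if_pos h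
  have step_nonpos : ∀ z : ℤ, z ≤ 0 → stepFn z = 0 := fun z h => if_neg (not_lt.2 h)
  have step_le : ∀ z : ℤ, stepFn z ≤ 1 := by
    intro z; unfold stepFn; split <;> simp
  -- sup over Bool
  have sup_true : ∀ (t : Finset V) (f : V → Bool), t.sup f = true ↔ ∃ j ∈ t, f j = true := by
    intro t f
    constructor
    · intro h
      by_contra hc
      push_neg at hc
      have : t.sup f = false := by
        rw [show (false = (⊥ : Bool)) from rfl, Finset.sup_eq_bot_iff]
        intro b hb; simpa using hc b hb
      simp [this] at h
    · rintro ⟨j, hj, hfj⟩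
      have := Finset.le_sup (f := f) hj
      rw [hfj] at this
      exact le_antisymm (Bool.le_true _) this
  -- simplified recursion (u ≡ 0)
  have hx_rec' : ∀ k i, x (k + 1) i =
      stepFn ((R i : ℤ) - (s k i : ℤ)) *
        stepFn ((x k i : ℤ) +
          (∑ j ∈ Finset.univ.filter (fun j => E j i), (c k i j : ℤ) * (x k j : ℤ))) := by
    intro k i; rw [hx_rec]; norm_num [hu0]
  have hsum_nonneg : ∀ k i,
      (0:ℤ) ≤ ∑ j ∈ Finset.univ.filter (fun j => E j i), (c k i j : ℤ) * (x k j : ℤ) := by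
    intro k i; apply Finset.sum_nonneg; intro j _; positivity
  -- x is 0/1 valued
  have hx01 : ∀ k i, x k i ≤ 1 := by
    intro k
    induction k with
    | zero => intro i; rw [hx_init]; exact hx0 i
    | succ k ih =>
      intro i
      rw [hx_rec']
      calc stepFn _ * stepFn _ ≤ 1 * 1 := Nat.mul_le_mul (step_le _) (step_le _)
        _ = 1 := by norm_num
  -- if infected and not yet recovered, stays infected
  have hx_step_of_inf : ∀ k i, x k i = 1 → s k i < R i → x (k+1) i = 1 := by
    intro k i hx hs
    rw [hx_rec', step_pos _ (by omega), step_pos, one_mul]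
    have := hsum_nonneg k i
    rw [hx]
    push_cast
    linarith
  -- s is monotone
  have s_mono : ∀ i t d, s t i ≤ s (t + d) i := by
    intro i t d
    induction d with
    | zero => simp
    | succ d ih => rw [show t + (d+1) = (t+d) + 1 from rfl, hs_rec]; omega
  have s_le_self : ∀ k i, s k i ≤ k := by
    intro k i
    induction k with
    | zero => simp [hs_init]
    | succ k ih => rw [hs_rec]; have := hx01 k i; omega
  -- forward persistence
  have L_fwd : ∀ i t, x t i = 1 → ∀ d, s t i + d ≤ R i →
      x (t + d) i = 1 ∧ s (t + d) i = s t i + d := by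
    intro i t hx d
    induction d with
    | zero => intro _; simpa using hx
    | succ d ih =>
      intro hd
      obtain ⟨hx', hs'⟩ := ih (by omega)
      have hlt : s (t + d) i < R i := by omega
      refine ⟨?_, ?_⟩
      · rw [show t + (d+1) = (t+d) + 1 from rfl]
        exact hx_step_of_inf _ _ hx' hlt
      · rw [show t + (d+1) = (t+d) + 1 from rfl, hs_rec, hx', hs']
        omega
  -- backward structure: if 0 < s k < R then the last s k steps were infected
  have J : ∀ k i, 1 ≤ s k i → s k i < R i →
      x k i = 1 ∧ ∀ d, 1 ≤ d → d ≤ s k i → x (k - d) i = 1 ∧ s (k - d) i = s k i - d := by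
    intro k
    induction k with
    | zero => intro i h1 _; rw [hs_init] at h1; omega
    | succ k ih =>
      intro i h1 hR'
      have hsrec := hs_rec k i
      have hxk : x k i = 0 ∨ x k i = 1 := by have := hx01 k i; omega
      rcases hxk with hxk | hxk
      · exfalso
        have hs : s (k+1) i = s k i := by omega
        have := (ih i (by omega) (by omega)).1
        omega
      · have hsk : s (k+1) i = s k i + 1 := by omega
        have hxk1 : x (k+1) i = 1 := hx_step_of_inf k i hxk (by omega)
        refine ⟨hxk1, ?_⟩
        intro d hd1 hd2
        rcases Nat.lt_or_ge d 2 with hd | hd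
        · have hd1' : d = 1 := by omega
          subst hd1'
          exact ⟨by simpa using hxk, by simp only [Nat.add_sub_cancel]; omega⟩
        · have hk : k + 1 - d = k - (d - 1) := by omega
          rcases Nat.eq_zero_or_pos (s k i) with h0 | hpos
          · omega
          · obtain ⟨hx', hs'⟩ := (ih i hpos (by omega)).2 (d-1) (by omega) (by omega)
            exact ⟨by rw [hk]; exact hx', by rw [hk, hs']; omega⟩
  -- main claim by strong induction on k, simultaneously for all agents
  have main : ∀ (k : ℕ) (i : V),
      x k i = (if xb (k : ℤ) i then 1 else 0) ∧
      (R i ≤ s k i ↔ yb (k : ℤ) i = true) := by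
    intro k
    induction k using Nat.strong_induction_on with
    | _ k ih =>
      match k with
      | 0 =>
        intro i
        simp only [Nat.cast_zero]
        rw [hx_init, hs_init, hyb_init i]
        constructor
        · rcases bool_cases (xb 0 i) with h | h
          · rw [h]
            have h1 : x0 i ≠ 1 := fun hc => by simp [(hxb_init i).2 hc] at h
            have := hx0 i
            simp only [Bool.false_eq_true, if_false]
            omega
          · rw [h, if_pos rfl]
            exact (hxb_init i).1 h
        · simp only [Bool.false_eq_true, iff_false]
          have := hR i
          omega
      | (m+1) =>
        intro i
        have ihm := ih m (by omega) i
        have hcast : ((m + 1 : ℕ) : ℤ) = (m : ℤ) + 1 := by push_cast; ring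
        constructor
        · -- x part
          rw [hcast, hxb_rec m i, hx_rec']
          have h1 : stepFn ((R i : ℤ) - (s m i : ℤ)) = if yb (m:ℤ) i then 0 else 1 := by
            rcases bool_cases (yb (m:ℤ) i) with h | h
            · have hlt : s m i < R i := by
                by_contra hc
                push_neg at hc
                rw [ihm.2.1 hc] at h
                cases h
              rw [h]
              simp only [Bool.false_eq_true, if_false]
              exact step_pos _ (by omega)
            · have hge : R i ≤ s m i := ihm.2.2 h
              rw [h, if_pos rfl]
              exact step_nonpos _ (by omega)
          have hxm : ∀ j : V, x m j = if xb (m:ℤ) j then 1 else 0 :=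
            fun j => (ih m (by omega) j).1
          have hxm_iff : ∀ j : V, x m j = 1 ↔ xb (m:ℤ) j = true := by
            intro j
            rcases bool_cases (xb (m:ℤ) j) with hb | hb <;> rw [hb] <;> simp [hxm j, hb]
          have h2 : stepFn ((x m i : ℤ) +
              (∑ j ∈ Finset.univ.filter (fun j => E j i), (c m i j : ℤ) * (x m j : ℤ)))
              = if (xb (m:ℤ) i || (Finset.univ.filter (fun j => E j i)).sup
                  (fun j => decide (c m i j = 1) && xb (m:ℤ) j)) then 1 else 0 := by
            rcases bool_cases (xb (m:ℤ) i || (Finset.univ.filter (fun j => E j i)).sup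
                (fun j => decide (c m i j = 1) && xb (m:ℤ) j)) with h | h
            · rw [h]
              simp only [Bool.false_eq_true, if_false]
              apply step_nonpos
              rw [Bool.or_eq_false_iff] at h
              obtain ⟨hxf, hsupf⟩ := h
              have hxmi : x m i = 0 := by
                have := hxm i; rw [hxf] at this; simpa using this
              have hsum0 : ∑ j ∈ Finset.univ.filter (fun j => E j i),
                  (c m i j : ℤ) * (x m j : ℤ) = 0 := by
                apply Finset.sum_eq_zero
                intro j hj
                by_contra hne
                have hcx : c m i j ≠ 0 ∧ x m j ≠ 0 := by
                  constructor <;> intro h0 <;> rw [h0] at hne <;> simp at hne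
                have hc1 : c m i j = 1 := by have := hc01 m i j; omega
                have hx1 : x m j = 1 := by have := hx01 m j; omega
                have hjT : (decide (c m i j = 1) && xb (m:ℤ) j) = true := by
                  rw [Bool.and_eq_true]
                  exact ⟨by simp [hc1], (hxm_iff j).1 hx1⟩
                have := (sup_true (Finset.univ.filter fun j => E j i)
                  (fun j => decide (c m i j = 1) && xb (m:ℤ) j)).2 ⟨j, hj, hjT⟩
                rw [hsupf] at this
                cases this
              rw [hxmi, hsum0]
              norm_num
            · rw [h, if_pos rfl]
              apply step_pos
              rw [Bool.or_eq_true] at h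
              rcases h with h | h
              · have hx1 : x m i = 1 := (hxm_iff i).2 h
                have := hsum_nonneg m i
                rw [hx1]
                push_cast
                linarith
              · obtain ⟨j, hj, hjT⟩ := (sup_true _ _).1 h
                rw [Bool.and_eq_true] at hjT
                have hc1 : c m i j = 1 := by simpa using hjT.1
                have hx1 : x m j = 1 := (hxm_iff j).2 hjT.2
                have hle : (1:ℤ) ≤ ∑ j ∈ Finset.univ.filter (fun j => E j i),
                    (c m i j : ℤ) * (x m j : ℤ) := by
                  have hterm : (c m i j : ℤ) * (x m j : ℤ) ≤
                      ∑ j ∈ Finset.univ.filter (fun j => E j i),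
                        (c m i j : ℤ) * (x m j : ℤ) := by
                    exact Finset.single_le_sum
                      (f := fun j => (c m i j : ℤ) * (x m j : ℤ))
                      (fun j _ => by positivity) hj
                  rw [hc1, hx1] at hterm
                  simpa using hterm
                have : (0:ℤ) ≤ (x m i : ℤ) := by positivity
                linarith
          rw [h1, h2]
          rcases bool_cases (yb (m:ℤ) i) with h | h <;>
            rcases bool_cases (xb (m:ℤ) i ||
              (Finset.univ.filter (fun j => E j i)).sup
                (fun j => decide (c m i j = 1) && xb (m:ℤ) j)) with h' | h' <;>
            simp [h, h']
        · -- y part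
          rw [hcast, hyb_rec m i, hs_rec]
          rcases bool_cases (yb (m:ℤ) i) with h | h
          · -- yb m = false : s m < R
            rw [h]
            simp only [Bool.false_or]
            have hslt : s m i < R i := by
              by_contra hc
              push_neg at hc
              rw [ihm.2.1 hc] at h
              cases h
            rcases Nat.lt_or_ge (m+1) (R i) with hm | hm
            · -- too early; both sides false
              have hneg : ((m:ℤ) - R i + 1) < 0 := by
                have : (m:ℤ) + 1 < (R i : ℤ) := by exact_mod_cast hm
                omega
              rw [hxb_neg _ hneg i]
              have h1 := s_le_self m i
              have h2 := hx01 m i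
              simp only [Bool.false_eq_true, iff_false]
              omega
            · set t := m + 1 - R i with ht
              have htc : ((t:ℕ):ℤ) = (m:ℤ) - R i + 1 := by
                have h1 : (R i : ℤ) ≤ (m:ℤ) + 1 := by exact_mod_cast hm
                rw [ht]
                push_cast [hm]
                omega
              rw [← htc]
              have htm : t ≤ m := by have := hR i; omega
              have ihT := ih t (by omega) i
              have hxt_iff : xb ((t:ℕ):ℤ) i = true ↔ x t i = 1 := by
                rcases bool_cases (xb ((t:ℕ):ℤ) i) with hb | hb <;>
                  rw [hb] <;> simp [ihT.1, hb]
              rw [hxt_iff]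
              constructor
              · intro hge
                have hx01m := hx01 m i
                have hxm1 : x m i = 1 := by omega
                have hsm : s m i = R i - 1 := by omega
                rcases Nat.eq_zero_or_pos (s m i) with h0 | hpos
                · have : t = m := by have := hR i; omega
                  rw [this]; exact hxm1
                · have hd : R i - 1 ≤ s m i := by omega
                  obtain ⟨hx', _⟩ := (J m i hpos hslt).2 (R i - 1) (by omega) hd
                  have heq : m - (R i - 1) = t := by
                    have := s_le_self m i
                    omega
                  rwa [heq] at hx'
              · intro hxt
                rcases Nat.lt_or_ge (s t i) (R i) with hst | hst
                · obtain ⟨_, hs'⟩ := L_fwd i t hxt (R i - s t i) (by omega)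
                  have hle : t + (R i - s t i) ≤ m + 1 := by
                    have := s_le_self t i
                    omega
                  have hmono := s_mono i (t + (R i - s t i)) (m + 1 - (t + (R i - s t i)))
                  rw [show t + (R i - s t i) + (m + 1 - (t + (R i - s t i))) = m + 1
                    from by omega] at hmono
                  rw [hs_rec] at hmono
                  omega
                · have hmono := s_mono i t (m + 1 - t)
                  rw [show t + (m + 1 - t) = m + 1 from by omega, hs_rec] at hmono
                  omega
          · -- yb m = true : s m ≥ R
            rw [h]
            have hge : R i ≤ s m i := ihm.2.2 h
            simp only [Bool.true_or]
            simp only [iff_true]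
            omega
  intro i k
  exact main k i
end

section
/- Pathwise recursion for infection times (protected agent): assume x⁰_i = 0 for all i ∈ V, and let i ∈ V be protected against external infection, i.e., u_i(k) = 0 for all k. Then the first infection time satisfies k_i = inf_{j ∈ N_i} inf{k ∈ ℕ | k ≥ 1, c_{ji}(k−1) = 1, and k_j ≤ k−1 ≤ k_j + R_j}, where the inner condition requires k_j < ∞ and the infimum is taken in ℕ ∪ {∞} (inf ∅ = ∞). -/
open Finset

/-- Pathwise recursion for infection times (protected agent): assuming `x⁰ ≡ 0`, if agent
`i` is protected against external infection (`u_i(k) = 0` for all `k`), then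
`k_i = inf_{j ∈ N_i} inf{k ≥ 1 | c_{ji}(k−1) = 1 and k_j ≤ k−1 ≤ k_j + R_j}`,
infima taken in `ℕ ∪ {∞}`. -/
theorem stmt15 {V : Type*} [Fintype V] [DecidableEq V]
    (E : V → V → Prop) [DecidableRel E]
    (hEsymm : ∀ i j, E i j ↔ E j i) (hEirr : ∀ i, ¬ E i i)
    (R : V → ℕ) (hR : ∀ i, 1 ≤ R i)
    (c : ℕ → V → V → ℕ) (hc01 : ∀ k i j, c k i j ≤ 1)
    (hcsymm : ∀ k i j, c k i j = c k j i)
    (u : ℕ → V → ℕ) (hu01 : ∀ k i, u k i ≤ 1)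
    (x0 : V → ℕ) (hx0 : ∀ i, x0 i ≤ 1)
    (x s : ℕ → V → ℕ)
    (hx_init : ∀ i, x 0 i = x0 i)
    (hs_init : ∀ i, s 0 i = 0)
    (hx_rec : ∀ k i, x (k + 1) i =
      stepFn ((R i : ℤ) - (s k i : ℤ)) *
        stepFn ((x k i : ℤ) +
          (∑ j ∈ Finset.univ.filter (fun j => E j i), (c k i j : ℤ) * (x k j : ℤ)) +
          (u k i : ℤ)))
    (hs_rec : ∀ k i, s (k + 1) i = s k i + x k i)
    (y : ℕ → V → ℕ)
    (hy : ∀ k i, y k i = 1 - stepFn ((R i : ℤ) - (s k i : ℤ)))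
    (ki : V → ℕ∞)
    (hki : ∀ i, ki i = sInf {n : ℕ∞ | ∃ m : ℕ, x m i = 1 ∧ n = (m : ℕ∞)})
    (hx0zero : ∀ i, x0 i = 0) :
    ∀ i : V, (∀ k : ℕ, u k i = 0) →
      ki i = ⨅ j ∈ Finset.univ.filter (fun j => E j i),
        sInf {n : ℕ∞ | ∃ k : ℕ, 1 ≤ k ∧ c (k - 1) j i = 1 ∧
          ki j ≤ ((k - 1 : ℕ) : ℕ∞) ∧ ((k - 1 : ℕ) : ℕ∞) ≤ ki j + (R j : ℕ∞) ∧
          n = (k : ℕ∞)} := by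
  -- basic bounds
  have hx1 : ∀ k i, x k i ≤ 1 := by
    intro k
    induction k with
    | zero => intro i; rw [hx_init]; exact hx0 i
    | succ k ih =>
      intro i
      rw [hx_rec]
      exact le_trans (Nat.mul_le_mul (stepFn_le_one _) (stepFn_le_one _)) (by norm_num)
  have hs_sum : ∀ k i, s k i = ∑ m ∈ Finset.range k, x m i := by
    intro k
    induction k with
    | zero => intro i; simp [hs_init]
    | succ k ih => intro i; rw [hs_rec, ih, Finset.sum_range_succ]
  -- nat-valued recursion
  have hx_rec' : ∀ k i, x (k + 1) i =
      (if s k i < R i then 1 else 0) *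
      (if 0 < x k i + (∑ j ∈ Finset.univ.filter (fun j => E j i), c k i j * x k j) + u k i
        then 1 else 0) := by
    intro k i
    rw [hx_rec k i]
    unfold stepFn
    have h1 : ((0 : ℤ) < (R i : ℤ) - (s k i : ℤ)) ↔ s k i < R i := by omega
    have h2 : ((0 : ℤ) < (x k i : ℤ) +
        (∑ j ∈ Finset.univ.filter (fun j => E j i), (c k i j : ℤ) * (x k j : ℤ)) +
        (u k i : ℤ)) ↔
        0 < x k i + (∑ j ∈ Finset.univ.filter (fun j => E j i), c k i j * x k j) + u k i := by
      push_cast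
      exact_mod_cast Iff.rfl
    rw [if_congr h1 rfl rfl, if_congr h2 rfl rfl]
  -- block structure of infections
  have hblock : ∀ (j : V) (N : ℕ), x N j = 1 → (∀ m : ℕ, m < N → x m j = 0) →
      ∀ m : ℕ, x m j = 1 ↔ N ≤ m ∧ m ≤ N + R j := by
    intro j N hN1 hN0 m
    have hsN : s N j = 0 := by
      rw [hs_sum]
      exact Finset.sum_eq_zero fun m' hm' => hN0 m' (Finset.mem_range.mp hm')
    have hb : ∀ t, t ≤ R j → x (N + t) j = 1 ∧ s (N + t) j = t := by
      intro t
      induction t with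
      | zero => intro _; exact ⟨hN1, hsN⟩
      | succ t ih =>
        intro ht
        obtain ⟨hx', hs'⟩ := ih (by omega)
        have hstep : s (N + (t + 1)) j = t + 1 := by
          rw [show N + (t + 1) = (N + t) + 1 from rfl, hs_rec, hs', hx']
        refine ⟨?_, hstep⟩
        rw [show N + (t + 1) = (N + t) + 1 from rfl, hx_rec', hs', hx',
          if_pos (by omega : t < R j), if_pos (by omega), mul_one]
    have hc : ∀ t, x (N + R j + 1 + t) j = 0 ∧ s (N + R j + 1 + t) j = R j + 1 := by
      intro t
      induction t with
      | zero =>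
        obtain ⟨hx', hs'⟩ := hb (R j) le_rfl
        have hstep : s (N + R j + 1) j = R j + 1 := by
          rw [show N + R j + 1 = (N + R j) + 1 from rfl, hs_rec, hs', hx']
        constructor
        · rw [show N + R j + 1 + 0 = (N + R j) + 1 from rfl, hx_rec', hs',
            if_neg (by omega), zero_mul]
        · simpa using hstep
      | succ t ih =>
        obtain ⟨hx', hs'⟩ := ih
        have hstep : s (N + R j + 1 + (t + 1)) j = R j + 1 := by
          rw [show N + R j + 1 + (t + 1) = (N + R j + 1 + t) + 1 from rfl, hs_rec, hs', hx']
        refine ⟨?_, hstep⟩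
        rw [show N + R j + 1 + (t + 1) = (N + R j + 1 + t) + 1 from rfl, hx_rec', hs',
          if_neg (by omega), zero_mul]
    constructor
    · intro hm
      constructor
      · by_contra hlt
        push_neg at hlt
        have := hN0 m hlt
        omega
      · by_contra hgt
        push_neg at hgt
        obtain ⟨t, rfl⟩ : ∃ t, m = N + R j + 1 + t := ⟨m - (N + R j + 1), by omega⟩
        have := (hc t).1
        omega
    · rintro ⟨h1, h2⟩
      obtain ⟨t, rfl⟩ : ∃ t, m = N + t := ⟨m - N, by omega⟩
      exact (hb t (by omega)).1
  -- basic facts about ki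
  have hki_le : ∀ (j : V) (m : ℕ), x m j = 1 → ki j ≤ (m : ℕ∞) := by
    intro j m hm
    rw [hki j]
    exact sInf_le ⟨m, hm, rfl⟩
  have hki_eq : ∀ (j : V) (h : ∃ m, x m j = 1), ki j = (Nat.find h : ℕ∞) := by
    intro j h
    refine le_antisymm (hki_le j _ (Nat.find_spec h)) ?_
    rw [hki j]
    apply le_sInf
    rintro n ⟨m, hm, rfl⟩
    exact Nat.cast_le.mpr (Nat.find_le hm)
  have hki_top : ∀ (j : V), (¬ ∃ m, x m j = 1) → ki j = ⊤ := by
    intro j h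
    rw [hki j, sInf_eq_top]
    rintro n ⟨m, hm, rfl⟩
    exact absurd ⟨m, hm⟩ h
  -- characterization of infection intervals via ki
  have hchar : ∀ (j : V) (m : ℕ),
      x m j = 1 ↔ ki j ≤ (m : ℕ∞) ∧ (m : ℕ∞) ≤ ki j + (R j : ℕ∞) := by
    intro j m
    by_cases h : ∃ n, x n j = 1
    · have hN1 : x (Nat.find h) j = 1 := Nat.find_spec h
      have hN0 : ∀ m', m' < Nat.find h → x m' j = 0 := by
        intro m' hm'
        have h1 := Nat.find_min h hm'
        have h2 := hx1 m' j
        omega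
      rw [hki_eq j h, hblock j (Nat.find h) hN1 hN0 m, ← Nat.cast_add]
      exact_mod_cast Iff.rfl
    · have hx0' : x m j ≠ 1 := fun hm => h ⟨m, hm⟩
      rw [hki_top j h]
      constructor
      · intro hm; exact absurd hm hx0'
      · rintro ⟨h1, -⟩
        have := top_le_iff.mp h1
        simp at this
  intro i hu
  refine le_antisymm ?_ ?_
  · -- ki i ≤ RHS
    refine le_iInf fun j => le_iInf fun hj => le_sInf ?_
    rintro n ⟨k, hk1, hcji, hl, hr, rfl⟩
    obtain ⟨m, rfl⟩ : ∃ m, k = m + 1 := ⟨k - 1, by omega⟩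
    simp only [Nat.add_sub_cancel] at hcji hl hr
    have hxj : x m j = 1 := (hchar j m).mpr ⟨hl, hr⟩
    by_cases hs : s m i < R i
    · have hmemj : j ∈ Finset.univ.filter (fun j' => E j' i) := hj
      have hterm : c m i j * x m j = 1 := by
        rw [hxj, mul_one, hcsymm m i j, hcji]
      have hsum : 0 < ∑ j' ∈ Finset.univ.filter (fun j' => E j' i), c m i j' * x m j' := by
        have hle : c m i j * x m j ≤
            ∑ j' ∈ Finset.univ.filter (fun j' => E j' i), c m i j' * x m j' :=
          Finset.single_le_sum (f := fun j' => c m i j' * x m j') (fun _ _ => Nat.zero_le _) hmemj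
        omega
      have hx : x (m + 1) i = 1 := by
        rw [hx_rec', if_pos hs, if_pos (by omega), mul_one]
      exact hki_le i (m + 1) hx
    · have hpos : 0 < s m i := by have := hR i; omega
      rw [hs_sum] at hpos
      have hne : (∑ m' ∈ Finset.range m, x m' i) ≠ 0 := by omega
      obtain ⟨m', hm', hxne⟩ := Finset.exists_ne_zero_of_sum_ne_zero hne
      have hxm' : x m' i = 1 := by have := hx1 m' i; omega
      calc ki i ≤ (m' : ℕ∞) := hki_le i m' hxm'
        _ ≤ ((m + 1 : ℕ) : ℕ∞) := by
            exact_mod_cast (by have := Finset.mem_range.mp hm'; omega : m' ≤ m + 1)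
  · -- RHS ≤ ki i
    by_cases h : ∃ m, x m i = 1
    · have hK1 : x (Nat.find h) i = 1 := Nat.find_spec h
      have hK0 : ∀ m, m < Nat.find h → x m i = 0 := by
        intro m hm
        have h1 := Nat.find_min h hm
        have h2 := hx1 m i
        omega
      have hkiK : ki i = (Nat.find h : ℕ∞) := hki_eq i h
      have hKpos : 1 ≤ Nat.find h := by
        rcases Nat.eq_zero_or_pos (Nat.find h) with h0 | h0
        · exfalso
          rw [h0, hx_init, hx0zero] at hK1
          omega
        · exact h0
      obtain ⟨m, hKm⟩ : ∃ m, Nat.find h = m + 1 := ⟨Nat.find h - 1, by omega⟩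
      have hsm : s m i = 0 := by
        rw [hs_sum]
        exact Finset.sum_eq_zero fun m' hm' =>
          hK0 m' (by have := Finset.mem_range.mp hm'; omega)
      have hxm : x m i = 0 := hK0 m (by omega)
      have hx1' : x (m + 1) i = 1 := hKm ▸ hK1
      rw [hx_rec', hsm, hxm, hu m, if_pos (by have := hR i; omega), one_mul] at hx1'
      have hsum : 0 < ∑ j ∈ Finset.univ.filter (fun j' => E j' i), c m i j * x m j := by
        by_contra hcon
        rw [if_neg (by omega)] at hx1'
        omega
      have hne : (∑ j ∈ Finset.univ.filter (fun j' => E j' i), c m i j * x m j) ≠ 0 := by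
        omega
      obtain ⟨j, hjmem, hjne⟩ := Finset.exists_ne_zero_of_sum_ne_zero hne
      obtain ⟨hcne, hxne⟩ := mul_ne_zero_iff.mp hjne
      have hcj : c m j i = 1 := by
        have h1 := hc01 m i j
        have h2 : c m i j = 1 := by omega
        rw [hcsymm m j i, h2]
      have hxj : x m j = 1 := by have := hx1 m j; omega
      obtain ⟨hl, hr⟩ := (hchar j m).mp hxj
      have hmemset : ((m + 1 : ℕ) : ℕ∞) ∈ {n : ℕ∞ | ∃ k : ℕ, 1 ≤ k ∧ c (k - 1) j i = 1 ∧
          ki j ≤ ((k - 1 : ℕ) : ℕ∞) ∧ ((k - 1 : ℕ) : ℕ∞) ≤ ki j + (R j : ℕ∞) ∧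
          n = (k : ℕ∞)} := by
        refine ⟨m + 1, by omega, ?_, ?_, ?_, rfl⟩ <;>
          simp only [Nat.add_sub_cancel]
        · exact hcj
        · exact hl
        · exact hr
      calc (⨅ j ∈ Finset.univ.filter (fun j => E j i),
            sInf {n : ℕ∞ | ∃ k : ℕ, 1 ≤ k ∧ c (k - 1) j i = 1 ∧
              ki j ≤ ((k - 1 : ℕ) : ℕ∞) ∧ ((k - 1 : ℕ) : ℕ∞) ≤ ki j + (R j : ℕ∞) ∧
              n = (k : ℕ∞)})
          ≤ sInf {n : ℕ∞ | ∃ k : ℕ, 1 ≤ k ∧ c (k - 1) j i = 1 ∧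
              ki j ≤ ((k - 1 : ℕ) : ℕ∞) ∧ ((k - 1 : ℕ) : ℕ∞) ≤ ki j + (R j : ℕ∞) ∧
              n = (k : ℕ∞)} := iInf₂_le j hjmem
        _ ≤ ((m + 1 : ℕ) : ℕ∞) := sInf_le hmemset
        _ = ki i := by rw [hkiK, hKm]
    · rw [hki_top i h]
      exact le_top
end
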